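/- Let C be a union of closed curves in ℝ^d with ε-sample S for some ε ≤ 1, let a and b be consecutive sample points (a → b), and let p be a point strictly between a and b on the arc [a,b]. Then d(p,S) = min(d(p,a), d(p,b)), and d(p,S) < d(p,s) for every sample point s ∉ {a,b}. -/

import Mathlib

open Metric Set EuclideanGeometry RealInnerProductSpace

noncomputable section

/-- Euclidean space `ℝ^d`. -/
abbrev Euc (d : ℕ) := EuclideanSpace ℝ (Fin d)

/-- The medial axis of `C`: points not having a unique closest point in `C`. -/
def medialAxis {d : ℕ} (C : Set (Euc d)) : Set (Euc d) :=
  {x | ¬ ∃! y, y ∈ C ∧ dist x y = Metric.infDist x C}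

/-- Local feature size: distance to the medial axis. -/
def lfs {d : ℕ} (C : Set (Euc d)) (p : Euc d) : ℝ :=
  Metric.infDist p (medialAxis C)

/-- `S` is an ε-sample of `C`. -/
def IsEpsSample {d : ℕ} (ε : ℝ) (C S : Set (Euc d)) : Prop :=
  S ⊆ C ∧ S.Finite ∧ ∀ p ∈ C, Metric.infDist p S < ε * lfs C p

/-- A closed curve: image of an injective continuous map from the circle. -/
def IsClosedCurve {d : ℕ} (c : Set (Euc d)) : Prop :=
  ∃ γ : AddCircle (1 : ℝ) → Euc d, Continuous γ ∧ Function.Injective γ ∧ Set.range γ = c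

/-- A finite disjoint union of closed curves. -/
def IsCurveUnion {d : ℕ} (C : Set (Euc d)) : Prop :=
  ∃ F : Finset (Set (Euc d)), (∀ c ∈ F, IsClosedCurve c) ∧
    (F : Set (Set (Euc d))).Pairwise Disjoint ∧ C = ⋃ c ∈ F, c

/-- An (injective continuous) arc in `C` from `a` to `b`, parametrized on `[0,1]`. -/
def IsArc {d : ℕ} (C : Set (Euc d)) (γ : ℝ → Euc d) (a b : Euc d) : Prop :=
  ContinuousOn γ (Set.Icc 0 1) ∧ Set.InjOn γ (Set.Icc 0 1) ∧
  γ 0 = a ∧ γ 1 = b ∧ γ '' Set.Icc 0 1 ⊆ C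

/-- `a → b`: consecutive sample points, via the arc `γ` whose interior misses `S`. -/
def ConsecutiveArc {d : ℕ} (C S : Set (Euc d)) (γ : ℝ → Euc d) (a b : Euc d) : Prop :=
  a ∈ S ∧ b ∈ S ∧ IsArc C γ a b ∧ ∀ t ∈ Set.Ioo (0:ℝ) 1, γ t ∉ S

/-- `X(a,b)`: points equidistant from `a`, `b` at distance `d(a,b)/(ε√(4-ε²))`. -/
def Xset {d : ℕ} (ε : ℝ) (a b : Euc d) : Set (Euc d) :=
  {x | dist x a = dist a b / (ε * Real.sqrt (4 - ε ^ 2)) ∧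
       dist x b = dist a b / (ε * Real.sqrt (4 - ε ^ 2))}

/-- Compatibility of the triple `(a,b,c)`. -/
def Compatible {d : ℕ} (ε : ℝ) (a b c : Euc d) : Prop :=
  (∀ x ∈ Xset ε a b, c ∉ Metric.closedBall x (dist x b)) ∧
  (∀ y ∈ Xset ε b c, a ∉ Metric.closedBall y (dist y b))


section Helpers
open Metric Set Function

namespace CurveHelper

lemma coe_toIcoMod (a x : ℝ) :
    ((toIcoMod one_pos a x : ℝ) : AddCircle (1:ℝ)) = (x : AddCircle (1:ℝ)) := by
  rw [QuotientAddGroup.eq_iff_sub_mem]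
  rw [toIcoMod]
  refine ⟨-(toIcoDiv one_pos a x), by simp⟩

/-- every point of the circle has a representative in `Ico a (a+1)` -/
lemma exists_rep (a : ℝ) (z : AddCircle (1:ℝ)) :
    ∃ x : ℝ, x ∈ Ico a (a + 1) ∧ (x : AddCircle (1:ℝ)) = z := by
  induction z using QuotientAddGroup.induction_on with
  | H y => exact ⟨toIcoMod one_pos a y, toIcoMod_mem_Ico one_pos a y, coe_toIcoMod a y⟩

lemma coe_inj {a x y : ℝ} (hx : x ∈ Ico a (a+1)) (hy : y ∈ Ico a (a+1))
    (h : (x : AddCircle (1:ℝ)) = y) : x = y :=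
  (AddCircle.coe_eq_coe_iff_of_mem_Ico hx hy).1 h



lemma isOpenMap_coe' : IsOpenMap ((↑) : ℝ → AddCircle (1:ℝ)) :=
  QuotientAddGroup.isOpenMap_coe

lemma coe_ne_of_Ioo {a x y : ℝ} (hx : x ∈ Ioo a (a+1)) (hy : y ∈ Ioo x (a+1))
    (h : (x : AddCircle (1:ℝ)) = y) : False := by
  rw [QuotientAddGroup.eq_iff_sub_mem, AddSubgroup.mem_zmultiples_iff] at h
  obtain ⟨k, hk⟩ := h
  rw [zsmul_eq_mul, mul_one] at hk
  have h1 : (k:ℝ) < 0 := by rw [hk]; linarith [hy.1]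
  have h2 : (-1:ℝ) < (k:ℝ) := by rw [hk]; linarith [hx.1, hy.2]
  have hk1 : (-1:ℤ) < k := by exact_mod_cast h2
  have hk2 : k < 0 := by exact_mod_cast h1
  omega

lemma circle_core {h : ℝ → AddCircle (1:ℝ)} {K : Set (AddCircle (1:ℝ))}
    (hcont : ContinuousOn h (Icc 0 1)) (hinj : InjOn h (Icc 0 1))
    {t : ℝ} (ht : t ∈ Ioo (0:ℝ) 1) {s' : AddCircle (1:ℝ)}
    (hs : s' ∉ h '' Icc 0 1) (hK : IsPreconnected K)
    (hpK : h t ∈ K) (hsK : s' ∈ K) (haK : h 0 ∉ K) (hbK : h 1 ∉ K)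
    {c α β : ℝ} (hc : (c : AddCircle (1:ℝ)) = h t)
    (hα : (α : AddCircle (1:ℝ)) = h 0) (hβ : (β : AddCircle (1:ℝ)) = h 1)
    (hcα : c < α) (hαβ : α < β) (hβc : β < c + 1) : False := by
  have ht01 : t ∈ Icc (0:ℝ) 1 := Ioo_subset_Icc_self ht
  set A1 : Set (AddCircle (1:ℝ)) := (↑) '' Ioo α β with hA1
  set A2 : Set (AddCircle (1:ℝ)) := (↑) '' Ioo β (α+1) with hA2
  have hA1o : IsOpen A1 := isOpenMap_coe' _ isOpen_Ioo
  have hA2o : IsOpen A2 := isOpenMap_coe' _ isOpen_Ioo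
  have hdisj : Disjoint A1 A2 := by
    rw [Set.disjoint_left]
    rintro z ⟨x, hx, rfl⟩ ⟨y, hy, hxy⟩
    exact coe_ne_of_Ioo ⟨hx.1, hx.2.trans (by linarith)⟩
      ⟨hx.2.trans_le (le_of_lt hy.1), hy.2⟩ hxy.symm
  -- covering of the complement of {h 0, h 1}
  have hcover : ∀ z : AddCircle (1:ℝ), z ≠ h 0 → z ≠ h 1 → z ∈ A1 ∪ A2 := by
    intro z hz0 hz1
    obtain ⟨x, hx, rfl⟩ := exists_rep α z
    have hxα : x ≠ α := fun he => hz0 (by rw [he, hα])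
    have hxβ : x ≠ β := fun he => hz1 (by rw [he, hβ])
    rcases lt_or_gt_of_ne hxβ with hlt | hgt
    · exact Or.inl ⟨x, ⟨lt_of_le_of_ne hx.1 (Ne.symm hxα), hlt⟩, rfl⟩
    · exact Or.inr ⟨x, ⟨hgt, hx.2⟩, rfl⟩
  have hpA2 : h t ∈ A2 := ⟨c + 1, ⟨hβc, by linarith⟩, by rw [AddCircle.coe_add_period, hc]⟩
  -- the open part of the path stays in A2
  have himgA2 : h '' Ioo 0 1 ⊆ A2 := by
    have hpre : IsPreconnected (h '' Ioo 0 1) :=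
      isPreconnected_Ioo.image h (hcont.mono Ioo_subset_Icc_self)
    refine hpre.subset_left_of_subset_union hA2o hA1o hdisj.symm ?_ ⟨h t, mem_image_of_mem h ht, hpA2⟩
    rintro z ⟨u, hu, rfl⟩
    have h0 : h u ≠ h 0 := fun he => hu.1.ne' (hinj (Ioo_subset_Icc_self hu) (by norm_num) he)
    have h1 : h u ≠ h 1 := fun he => hu.2.ne (hinj (Ioo_subset_Icc_self hu) (by norm_num) he)
    exact (union_comm A1 A2) ▸ hcover _ h0 h1
  -- the closed arc on the p-side is covered by the path
  have hsub2 : ∀ v ∈ Icc β (α+1), ((v:ℝ) : AddCircle (1:ℝ)) ∈ h '' Icc 0 1 := by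
    have hIc : IsCompact (Icc β (α+1)) := isCompact_Icc
    haveI : CompactSpace (Icc β (α+1)) := isCompact_iff_compactSpace.mp hIc
    set e : Icc β (α+1) → AddCircle (1:ℝ) := fun x => ((x:ℝ) : AddCircle (1:ℝ)) with he
    have heinj : Function.Injective e := by
      rintro ⟨x,hx⟩ ⟨y,hy⟩ hxy
      have hx' : x ∈ Ico β (β+1) := ⟨hx.1, lt_of_le_of_lt hx.2 (by linarith)⟩
      have hy' : y ∈ Ico β (β+1) := ⟨hy.1, lt_of_le_of_lt hy.2 (by linarith)⟩
      exact Subtype.ext (coe_inj hx' hy' hxy)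
    have hcoe : Continuous ((↑) : ℝ → AddCircle (1:ℝ)) := continuous_quotient_mk'
    have hecont : Continuous e := hcoe.comp continuous_subtype_val
    have hemb := hecont.isClosedEmbedding heinj
    let φ := Topology.IsEmbedding.toHomeomorph hemb.toIsEmbedding
    have hrange : ∀ u ∈ Icc (0:ℝ) 1, h u ∈ Set.range e := by
      intro u hu
      rcases hu.1.eq_or_lt with h0u | h0u
      · refine ⟨⟨α+1, ⟨by linarith, le_refl _⟩⟩, ?_⟩
        show ((α+1 : ℝ) : AddCircle (1:ℝ)) = h u
        rw [AddCircle.coe_add_period, hα, h0u]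
      rcases hu.2.eq_or_lt with hu1 | hu1
      · refine ⟨⟨β, ⟨le_refl _, by linarith⟩⟩, ?_⟩
        show ((β : ℝ) : AddCircle (1:ℝ)) = h u
        rw [hβ, hu1]
      · obtain ⟨y, hy, hye⟩ := himgA2 (mem_image_of_mem h (⟨h0u, hu1⟩ : u ∈ Ioo (0:ℝ) 1))
        exact ⟨⟨y, Ioo_subset_Icc_self hy⟩, hye⟩
    have heval : ∀ x : Set.range e, e (φ.symm x) = x := by
      intro x
      exact congrArg Subtype.val (φ.apply_symm_apply x)
    set G : ℝ → ℝ := fun u => if hu : u ∈ Icc (0:ℝ) 1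
      then ((φ.symm ⟨h u, hrange u hu⟩ : Icc β (α+1)) : ℝ) else β with hG
    have hGcont : ContinuousOn G (Icc 0 1) := by
      rw [continuousOn_iff_continuous_restrict]
      have hre : domRestrict (Icc (0:ℝ) 1) G
          = fun u : Icc (0:ℝ) 1 => ((φ.symm ⟨h u.1, hrange u.1 u.2⟩ : Icc β (α+1)) : ℝ) := by
        funext u; simp only [domRestrict, hG, dif_pos u.2]
      rw [hre]
      exact continuous_subtype_val.comp (φ.symm.continuous.comp
        ((hcont.restrict).subtype_mk (fun u => hrange u.1 u.2)))
    have hGval : ∀ u (hu : u ∈ Icc (0:ℝ) 1), ((G u : ℝ) : AddCircle (1:ℝ)) = h u := by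
      intro u hu
      have h1 := heval ⟨h u, hrange u hu⟩
      have h2 : G u = ((φ.symm ⟨h u, hrange u hu⟩ : Icc β (α+1)) : ℝ) := dif_pos hu
      rw [h2]
      exact h1
    have hG0 : G 0 = α + 1 := by
      have hm : (0:ℝ) ∈ Icc (0:ℝ) 1 := by norm_num
      have h1 : ((G 0 : ℝ) : AddCircle (1:ℝ)) = h 0 := hGval 0 hm
      have h2 : e ⟨G 0, by
          rw [show G 0 = ((φ.symm ⟨h 0, hrange 0 hm⟩ : Icc β (α+1)) : ℝ) from dif_pos hm]
          exact (φ.symm ⟨h 0, hrange 0 hm⟩).2⟩ = e ⟨α+1, ⟨by linarith, le_refl _⟩⟩ := by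
        show ((G 0 : ℝ) : AddCircle (1:ℝ)) = ((α+1 : ℝ) : AddCircle (1:ℝ))
        rw [h1, AddCircle.coe_add_period, hα]
      exact congrArg Subtype.val (heinj h2)
    have hG1 : G 1 = β := by
      have hm : (1:ℝ) ∈ Icc (0:ℝ) 1 := by norm_num
      have h1 : ((G 1 : ℝ) : AddCircle (1:ℝ)) = h 1 := hGval 1 hm
      have h2 : e ⟨G 1, by
          rw [show G 1 = ((φ.symm ⟨h 1, hrange 1 hm⟩ : Icc β (α+1)) : ℝ) from dif_pos hm]
          exact (φ.symm ⟨h 1, hrange 1 hm⟩).2⟩ = e ⟨β, ⟨le_refl _, by linarith⟩⟩ := by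
        show ((G 1 : ℝ) : AddCircle (1:ℝ)) = ((β : ℝ) : AddCircle (1:ℝ))
        rw [h1, hβ]
      exact congrArg Subtype.val (heinj h2)
    intro v hv
    have hv' : v ∈ Icc (G 1) (G 0) := by rw [hG0, hG1]; exact hv
    obtain ⟨u, hu, hGu⟩ := intermediate_value_Icc' (by norm_num : (0:ℝ) ≤ 1) hGcont hv'
    exact ⟨u, hu, by rw [← hGu]; exact (hGval u hu).symm⟩
  -- s' lies in A1
  have h0mem : h 0 ∈ h '' Icc 0 1 := mem_image_of_mem h (by norm_num : (0:ℝ) ∈ Icc 0 1)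
  have h1mem : h 1 ∈ h '' Icc 0 1 := mem_image_of_mem h (by norm_num : (1:ℝ) ∈ Icc 0 1)
  have hs'A1 : s' ∈ A1 := by
    rcases hcover s' (fun he => hs (he ▸ h0mem)) (fun he => hs (he ▸ h1mem)) with h1 | h2
    · exact h1
    · obtain ⟨y, hy, rfl⟩ := h2
      exact absurd (hsub2 y (Ioo_subset_Icc_self hy)) hs
  have hKsub : K ⊆ A1 ∪ A2 := fun z hz =>
    hcover z (fun he => haK (he ▸ hz)) (fun he => hbK (he ▸ hz))
  obtain ⟨z, hzK, hz1, hz2⟩ := hK A1 A2 hA1o hA2o hKsub ⟨s', hsK, hs'A1⟩ ⟨h t, hpK, hpA2⟩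
  exact (Set.disjoint_left.mp hdisj hz1) hz2


lemma circle_sep {h : ℝ → AddCircle (1:ℝ)} {K : Set (AddCircle (1:ℝ))}
    (hcont : ContinuousOn h (Icc 0 1)) (hinj : InjOn h (Icc 0 1))
    {t : ℝ} (ht : t ∈ Ioo (0:ℝ) 1) {s' : AddCircle (1:ℝ)}
    (hs : s' ∉ h '' Icc 0 1) (hK : IsPreconnected K)
    (hpK : h t ∈ K) (hsK : s' ∈ K) : h 0 ∈ K ∨ h 1 ∈ K := by
  by_contra hcon
  push_neg at hcon
  obtain ⟨haK, hbK⟩ := hcon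
  have ht01 : t ∈ Icc (0:ℝ) 1 := Ioo_subset_Icc_self ht
  have h0 : (0:ℝ) ∈ Icc (0:ℝ) 1 := by norm_num
  have h1 : (1:ℝ) ∈ Icc (0:ℝ) 1 := by norm_num
  obtain ⟨c, hcmem, hc⟩ := exists_rep 0 (h t)
  have hrep : ∀ z : AddCircle (1:ℝ), z ≠ h t → ∃ x ∈ Ioo c (c+1), (x : AddCircle (1:ℝ)) = z := by
    intro z hz
    obtain ⟨x, hx, hxz⟩ := exists_rep c z
    refine ⟨x, ⟨lt_of_le_of_ne hx.1 ?_, hx.2⟩, hxz⟩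
    rintro rfl
    exact hz (hxz ▸ hc)
  have hne0 : h 0 ≠ h t := fun he => ht.1.ne (hinj h0 ht01 he)
  have hne1 : h 1 ≠ h t := fun he => ht.2.ne' (hinj h1 ht01 he)
  obtain ⟨α, hαm, hα⟩ := hrep (h 0) hne0
  obtain ⟨β, hβm, hβ⟩ := hrep (h 1) hne1
  have hαβ : α ≠ β := by
    rintro rfl
    exact (by norm_num : (0:ℝ) ≠ 1) (hinj h0 h1 (hα.symm.trans hβ))
  rcases lt_or_gt_of_ne hαβ with hlt | hgt
  · exact circle_core hcont hinj ht hs hK hpK hsK haK hbK hc hα hβ hαm.1 hlt hβm.2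
  · -- apply with the reversed path
    set h' : ℝ → AddCircle (1:ℝ) := fun u => h (1 - u) with hh'
    have hmaps : ∀ u ∈ Icc (0:ℝ) 1, 1 - u ∈ Icc (0:ℝ) 1 := by
      intro u hu; constructor <;> [linarith [hu.2]; linarith [hu.1]]
    have himg : h' '' Icc 0 1 = h '' Icc 0 1 := by
      ext z
      constructor
      · rintro ⟨u, hu, rfl⟩; exact ⟨1 - u, hmaps u hu, rfl⟩
      · rintro ⟨u, hu, rfl⟩
        exact ⟨1 - u, hmaps u hu, by simp [hh']⟩
    have hcont' : ContinuousOn h' (Icc 0 1) := by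
      apply hcont.comp (by fun_prop : Continuous (fun u : ℝ => 1 - u)).continuousOn
      intro u hu; exact hmaps u hu
    have hinj' : InjOn h' (Icc 0 1) := by
      intro u hu v hv huv
      have := hinj (hmaps u hu) (hmaps v hv) huv
      linarith [this]
    have ht' : 1 - t ∈ Ioo (0:ℝ) 1 := ⟨by linarith [ht.2], by linarith [ht.1]⟩
    refine circle_core hcont' hinj' ht' (himg ▸ hs) hK ?_ hsK ?_ ?_
      (by show ((c:ℝ):AddCircle (1:ℝ)) = h' (1-t); simp only [hh']; rw [show (1:ℝ)-(1-t) = t by ring]; exact hc)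
      (by show _ = h' 0; simp only [hh']; norm_num; exact hβ)
      (by show _ = h' 1; simp only [hh']; norm_num; exact hα)
      hβm.1 hgt hαm.2
    · show h (1 - (1-t)) ∈ K
      rw [show (1:ℝ)-(1-t) = t by ring]; exact hpK
    · show h (1 - 0) ∉ K
      norm_num; exact hbK
    · show h (1 - 1) ∉ K
      norm_num; exact haK

end CurveHelper

open Metric in
lemma nearest_continuousOn {X : Type*} [MetricSpace X] {C : Set X}
    {π : X → X} {T : Set X}
    (hmem : ∀ x ∈ T, π x ∈ C ∧ dist x (π x) = infDist x C)
    (huniq : ∀ x ∈ T, ∀ y ∈ C, dist x y = infDist x C → y = π x)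
    (hcomp : IsCompact C) :
    ContinuousOn π T := by
  intro x hx
  rw [Metric.continuousWithinAt_iff]
  intro ε hε
  set C' := C ∩ {y | ε ≤ dist y (π x)} with hC'
  have hC'c : IsCompact C' := hcomp.inter_right (isClosed_le continuous_const (by fun_prop))
  rcases C'.eq_empty_or_nonempty with hemp | hne
  · refine ⟨1, one_pos, fun {y} hy _ => ?_⟩
    by_contra hcon
    push_neg at hcon
    exact (Set.eq_empty_iff_forall_notMem.1 hemp (π y)) ⟨(hmem y hy).1, hcon⟩
  · obtain ⟨y0, hy0, hy0min⟩ := hC'c.exists_isMinOn hne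
      (Continuous.continuousOn (by fun_prop : Continuous (fun y => dist x y)))
    set m := dist x y0 with hm
    have hy0C : y0 ∈ C := hy0.1
    have hlt : infDist x C < m := by
      rcases lt_or_eq_of_le (infDist_le_dist_of_mem hy0C) with h | h
      · exact h
      · exfalso
        have := huniq x hx y0 hy0C h.symm
        have hd : dist y0 (π x) = 0 := by rw [this]; simp
        have := hy0.2
        rw [Set.mem_setOf_eq, hd] at this
        linarith
    refine ⟨(m - infDist x C)/2, by linarith, fun {y} hy hxy => ?_⟩
    by_contra hcon
    push_neg at hcon
    have hπy : π y ∈ C' := ⟨(hmem y hy).1, hcon⟩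
    have h1 : m ≤ dist x (π y) := hy0min hπy
    have h2 : dist y (π y) = infDist y C := (hmem y hy).2
    have h3 : infDist y C ≤ infDist x C + dist y x := infDist_le_infDist_add_dist
    have h4 : dist x (π y) ≤ dist x y + dist y (π y) := dist_triangle _ _ _
    rw [dist_comm y x] at hxy
    rw [dist_comm y x] at h3
    linarith [hxy]

/-- A preconnected subset of a finite union of pairwise disjoint closed sets that
meets one of them is contained in it. -/
lemma preconnected_subset_piece {X : Type*} [MetricSpace X]
    {F : Finset (Set X)} (hcl : ∀ c ∈ F, IsClosed c)
    (hdisj : (F : Set (Set X)).Pairwise Disjoint)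
    {c0 : Set X} (hc0 : c0 ∈ F) {K : Set X}
    (hK : IsPreconnected K) (hKC : K ⊆ ⋃ c ∈ F, c) {x : X} (hxK : x ∈ K) (hxc0 : x ∈ c0) :
    K ⊆ c0 := by
  classical
  set R : Set X := ⋃ c ∈ F.erase c0, c with hR
  have hRcl : IsClosed R := by
    apply Set.Finite.isClosed_biUnion (Finset.finite_toSet _)
    intro c hc
    exact hcl c (Finset.mem_of_mem_erase hc)
  have hc0cl : IsClosed c0 := hcl c0 hc0
  have hdisj0 : Disjoint c0 R := by
    rw [Set.disjoint_iff_inter_eq_empty]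
    ext z
    simp only [Set.mem_inter_iff, Set.mem_empty_iff_false, iff_false, not_and]
    intro hz0
    simp only [hR, Set.mem_iUnion, not_exists]
    intro c hc
    exact fun hzc => Set.disjoint_left.1
      (hdisj hc0 (Finset.mem_coe.2 (Finset.mem_of_mem_erase hc))
        (fun he => (Finset.ne_of_mem_erase hc) he.symm)) hz0 hzc
  obtain ⟨U, V, hUo, hVo, hc0U, hRV, hUV⟩ := normal_separation hc0cl hRcl hdisj0
  have hKUV : K ⊆ U ∪ V := by
    intro z hz
    rcases Set.mem_iUnion₂.1 (hKC hz) with ⟨c, hc, hzc⟩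
    by_cases hcc : c = c0
    · exact Or.inl (hc0U (hcc ▸ hzc))
    · exact Or.inr (hRV (Set.mem_biUnion (Finset.mem_erase.2 ⟨hcc, hc⟩) hzc))
  have hKU : K ⊆ U := hK.subset_left_of_subset_union hUo hVo hUV hKUV ⟨x, hxK, hc0U hxc0⟩
  intro z hz
  rcases Set.mem_iUnion₂.1 (hKC hz) with ⟨c, hc, hzc⟩
  by_cases hcc : c = c0
  · exact hcc ▸ hzc
  · exfalso
    exact Set.disjoint_left.1 hUV (hKU hz)
      (hRV (Set.mem_biUnion (Finset.mem_erase.2 ⟨hcc, hc⟩) hzc))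

end Helpers

theorem stmt2 {d : ℕ} (ε : ℝ) (hε0 : 0 < ε) (hε : ε ≤ 1)
    (C S : Set (Euc d)) (hC : IsCurveUnion C) (hS : IsEpsSample ε C S)
    (a b : Euc d) (γ : ℝ → Euc d) (hab : ConsecutiveArc C S γ a b)
    (t : ℝ) (ht : t ∈ Set.Ioo (0:ℝ) 1) :
    Metric.infDist (γ t) S = min (dist (γ t) a) (dist (γ t) b) ∧
    ∀ s ∈ S, s ≠ a → s ≠ b → Metric.infDist (γ t) S < dist (γ t) s := by
  classical
  obtain ⟨haS, hbS, ⟨hγc, hγi, hγ0, hγ1, hγC⟩, hint⟩ := hab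
  obtain ⟨hSC, hSfin, hSsamp⟩ := hS
  obtain ⟨F, hF, hFdisj, hCF⟩ := hC
  haveI : Fact ((0:ℝ) < 1) := ⟨one_pos⟩
  set p := γ t with hp
  have ht01 : t ∈ Set.Icc (0:ℝ) 1 := Set.Ioo_subset_Icc_self ht
  have hpC : p ∈ C := hγC ⟨t, ht01, rfl⟩
  have hpS : p ∉ S := hint t ht
  have hFcomp : ∀ c ∈ F, IsCompact c := by
    intro c hc; obtain ⟨g, hgc, hgi, hgr⟩ := hF c hc
    rw [← hgr]; exact isCompact_range hgc
  have hCcomp : IsCompact C := by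
    rw [hCF]; exact F.finite_toSet.isCompact_biUnion hFcomp
  have hCne : C.Nonempty := ⟨p, hpC⟩
  have hSne : S.Nonempty := ⟨a, haS⟩
  have hScomp : IsCompact S := hSfin.isCompact
  set r := Metric.infDist p S with hr
  have hr0 : 0 ≤ r := Metric.infDist_nonneg
  have hrlfs : r < lfs C p :=
    lt_of_lt_of_le (hSsamp p hpC) (mul_le_of_le_one_left Metric.infDist_nonneg hε)
  -- uniqueness of nearest point near p
  have hexu : ∀ x : Euc d, dist x p ≤ r → ∃! y, y ∈ C ∧ dist x y = Metric.infDist x C := by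
    intro x hx
    by_contra hcon
    have hxM : x ∈ medialAxis C := hcon
    have h1 : lfs C p ≤ dist p x := Metric.infDist_le_dist_of_mem hxM
    rw [dist_comm p x] at h1
    linarith
  have hnear : ∀ x : Euc d, ∃ y, y ∈ C ∧ dist x y = Metric.infDist x C := by
    intro x
    obtain ⟨y, hy, hyd⟩ := hCcomp.exists_infDist_eq_dist hCne x
    exact ⟨y, hy, hyd.symm⟩
  set π : Euc d → Euc d := fun x => (hnear x).choose with hπ
  have hπmem : ∀ x, π x ∈ C := fun x => (hnear x).choose_spec.1
  have hπdist : ∀ x, dist x (π x) = Metric.infDist x C := fun x => (hnear x).choose_spec.2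
  have hπuniq : ∀ x : Euc d, dist x p ≤ r →
      ∀ y ∈ C, dist x y = Metric.infDist x C → y = π x := by
    intro x hx y hyC hyd
    obtain ⟨z, _, hzu⟩ := hexu x hx
    exact (hzu y ⟨hyC, hyd⟩).trans (hzu (π x) ⟨hπmem x, hπdist x⟩).symm
  have hπp : π p = p := by
    refine (hπuniq p (by simpa using hr0) p hpC ?_).symm
    rw [Metric.infDist_zero_of_mem hpC, dist_self]
  have hπcont : ContinuousOn π (Metric.closedBall p r) :=
    nearest_continuousOn
      (fun x _ => ⟨hπmem x, hπdist x⟩)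
      (fun x hx => hπuniq x (Metric.mem_closedBall.1 hx)) hCcomp
  -- key claim : samples other than a, b are strictly farther than r
  have key : ∀ s ∈ S, s ≠ a → s ≠ b → r < dist p s := by
    intro s hsS hsa hsb
    rcases lt_or_ge r (dist p s) with hlt | hle
    · exact hlt
    have hsC : s ∈ C := hSC hsS
    have hds : dist p s = r := le_antisymm hle (Metric.infDist_le_dist_of_mem hsS)
    exfalso
    -- the segment from p to s
    set σ : ℝ → Euc d := fun lam => p + lam • (s - p) with hσ
    have hσp : ∀ lam : ℝ, dist (σ lam) p = |lam| * r := by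
      intro lam
      rw [hσ, dist_eq_norm]
      simp only [add_sub_cancel_left]
      rw [norm_smul, Real.norm_eq_abs, ← dist_eq_norm, dist_comm s p, hds]
    have hσs : ∀ lam : ℝ, dist (σ lam) s = |1 - lam| * r := by
      intro lam
      have hv : p + lam • (s - p) - s = (1 - lam) • (p - s) := by module
      rw [hσ, dist_eq_norm, hv, norm_smul, Real.norm_eq_abs, ← dist_eq_norm, hds]
    have hσball : ∀ lam ∈ Set.Icc (0:ℝ) 1, σ lam ∈ Metric.closedBall p r := by
      intro lam hlam
      rw [Metric.mem_closedBall, hσp lam, abs_of_nonneg hlam.1]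
      exact mul_le_of_le_one_left hr0 hlam.2
    set f : ℝ → Euc d := fun lam => π (σ lam) with hf
    have hσcont : Continuous σ := by fun_prop
    have hfc : ContinuousOn f (Set.Icc 0 1) :=
      hπcont.comp hσcont.continuousOn hσball
    have hf0 : f 0 = p := by
      have h0 : σ 0 = p := by simp [hσ]
      show π (σ 0) = p
      rw [h0, hπp]
    have hf1 : f 1 = s := by
      have h1 : σ 1 = s := by simp [hσ]
      have h2 : s = π s := by
        refine hπuniq s (by rw [dist_comm]; exact hds.le) s hsC ?_
        rw [Metric.infDist_zero_of_mem hsC, dist_self]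
      show π (σ 1) = s
      rw [h1, ← h2]
    set K := f '' Set.Icc 0 1 with hKdef
    have hKpre : IsPreconnected K := isPreconnected_Icc.image f hfc
    have hKC : K ⊆ C := by rintro z ⟨u, hu, rfl⟩; exact hπmem _
    have hpK : p ∈ K := ⟨0, by norm_num, hf0⟩
    have hsK : s ∈ K := ⟨1, by norm_num, hf1⟩
    -- K and the arc lie in a single closed curve c0
    obtain ⟨c0, hc0F, hpc0⟩ : ∃ c0 ∈ F, p ∈ c0 := by
      have h := hpC; rw [hCF] at h; simpa using h
    have hclosed : ∀ c ∈ F, IsClosed c := fun c hc => (hFcomp c hc).isClosed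
    have hKc0 : K ⊆ c0 :=
      preconnected_subset_piece hclosed hFdisj hc0F hKpre
        (by rw [← hCF]; exact hKC) hpK hpc0
    have hγpre : IsPreconnected (γ '' Set.Icc 0 1) := isPreconnected_Icc.image γ hγc
    have hγc0 : γ '' Set.Icc 0 1 ⊆ c0 :=
      preconnected_subset_piece hclosed hFdisj hc0F hγpre
        (by rw [← hCF]; exact hγC) ⟨t, ht01, rfl⟩ hpc0
    obtain ⟨g, hgc, hgi, hgr⟩ := hF c0 hc0F
    have hgemb := hgc.isClosedEmbedding hgi
    set φ := Topology.IsEmbedding.toHomeomorph hgemb.toIsEmbedding with hφ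
    have hgeval : ∀ x : Set.range g, g (φ.symm x) = x :=
      fun x => congrArg Subtype.val (φ.apply_symm_apply x)
    set cl : ℝ → ℝ := fun u => max 0 (min 1 u) with hcl
    have hclcont : Continuous cl := by fun_prop
    have hclmem : ∀ u, cl u ∈ Set.Icc (0:ℝ) 1 :=
      fun u => ⟨le_max_left _ _, max_le (by norm_num) (min_le_left _ _)⟩
    have hcleq : ∀ u ∈ Set.Icc (0:ℝ) 1, cl u = u := by
      intro u hu
      show max 0 (min 1 u) = u
      rw [min_eq_right hu.2, max_eq_right hu.1]
    have hγrg : ∀ u : ℝ, γ (cl u) ∈ Set.range g := by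
      intro u; rw [hgr]; exact hγc0 ⟨cl u, hclmem u, rfl⟩
    set h : ℝ → AddCircle (1:ℝ) := fun u => φ.symm ⟨γ (cl u), hγrg u⟩ with hh
    have hgh : ∀ u, g (h u) = γ (cl u) := fun u => hgeval ⟨γ (cl u), hγrg u⟩
    have hhcont : Continuous h := by
      apply φ.symm.continuous.comp
      exact (hγc.comp_continuous hclcont hclmem).subtype_mk _
    have hhinj : Set.InjOn h (Set.Icc 0 1) := by
      intro u hu v hv huv
      have h2 := congrArg g huv
      rw [hgh, hgh, hcleq u hu, hcleq v hv] at h2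
      exact hγi hu hv h2
    have hKrange : K ⊆ Set.range g := by rw [hgr]; exact hKc0
    set K' := g ⁻¹' K with hK'
    have hK'pre : IsPreconnected K' :=
      hKpre.preimage_of_isClosedMap hgi hgemb.isClosedMap hKrange
    have hptK' : h t ∈ K' := by
      have h2 : g (h t) = p := by rw [hgh t, hcleq t ht01]
      show g (h t) ∈ K
      rw [h2]; exact hpK
    set s' : AddCircle (1:ℝ) := φ.symm ⟨s, by rw [hgr]; exact hKc0 hsK⟩ with hs'
    have hgs' : g s' = s := hgeval _
    have hs'K' : s' ∈ K' := by show g s' ∈ K; rw [hgs']; exact hsK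
    have hs'img : s' ∉ h '' Set.Icc 0 1 := by
      rintro ⟨u, hu, hus⟩
      have h2 : s = γ u := by rw [← hgs', ← hus, hgh u, hcleq u hu]
      rcases hu.1.eq_or_lt with h0u | h0u
      · exact hsa (by rw [h2, ← h0u, hγ0])
      rcases hu.2.eq_or_lt with hu1 | hu1
      · exact hsb (by rw [h2, hu1, hγ1])
      · exact hint u ⟨h0u, hu1⟩ (h2 ▸ hsS)
    have hwK : a ∈ K ∨ b ∈ K := by
      rcases CurveHelper.circle_sep hhcont.continuousOn hhinj ht hs'img hK'pre hptK' hs'K'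
        with h0 | h1
      · left
        have h2 : g (h 0) = a := by
          rw [hgh 0, hcleq 0 (by norm_num : (0:ℝ) ∈ Set.Icc (0:ℝ) 1), hγ0]
        rw [← h2]; exact h0
      · right
        have h2 : g (h 1) = b := by
          rw [hgh 1, hcleq 1 (by norm_num : (1:ℝ) ∈ Set.Icc (0:ℝ) 1), hγ1]
        rw [← h2]; exact h1
    obtain ⟨w, hwS', hwab, hwKmem⟩ : ∃ w, w ∈ S ∧ (w = a ∨ w = b) ∧ w ∈ K := by
      rcases hwK with h2 | h2
      exacts [⟨a, haS, Or.inl rfl, h2⟩, ⟨b, hbS, Or.inr rfl, h2⟩]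
    obtain ⟨u, hu, hfu⟩ := hwKmem
    have e1 : r ≤ dist p w := Metric.infDist_le_dist_of_mem hwS'
    have e2 : dist (σ u) w = Metric.infDist (σ u) C := by
      rw [← hfu]; exact hπdist (σ u)
    have e3 : Metric.infDist (σ u) C ≤ (1 - u) * r := by
      have h2 := Metric.infDist_le_dist_of_mem (x := σ u) hsC
      rwa [hσs u, abs_of_nonneg (by linarith [hu.2])] at h2
    have e4 : dist p w ≤ u * r + dist (σ u) w := by
      have h3 := dist_triangle p (σ u) w
      rw [dist_comm p (σ u), hσp u, abs_of_nonneg hu.1] at h3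
      linarith
    have hring : (1 - u) * r = r - u * r := by ring
    have e5 : Metric.infDist (σ u) C = (1 - u) * r := by
      have h6 : r ≤ u * r + Metric.infDist (σ u) C := by
        rw [← e2]; linarith
      linarith [e3, hring]
    have e6 : dist (σ u) s = Metric.infDist (σ u) C := by
      rw [hσs u, abs_of_nonneg (by linarith [hu.2]), e5]
    have e7 : s = f u := by
      refine hπuniq (σ u) ?_ s hsC e6
      rw [hσp u, abs_of_nonneg hu.1]
      exact mul_le_of_le_one_left hr0 hu.2
    rw [hfu] at e7
    rcases hwab with h2 | h2
    · exact hsa (e7.trans h2)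
    · exact hsb (e7.trans h2)
  constructor
  · have h1 : r ≤ min (dist p a) (dist p b) :=
      le_min (Metric.infDist_le_dist_of_mem haS) (Metric.infDist_le_dist_of_mem hbS)
    obtain ⟨s0, hs0S, hs0d⟩ := hScomp.exists_infDist_eq_dist hSne p
    have h2 : min (dist p a) (dist p b) ≤ r := by
      rcases eq_or_ne s0 a with h4 | hs0a
      · calc min (dist p a) (dist p b) ≤ dist p a := min_le_left _ _
          _ = dist p s0 := by rw [h4]
          _ = r := hs0d.symm
      rcases eq_or_ne s0 b with h4 | hs0b
      · calc min (dist p a) (dist p b) ≤ dist p b := min_le_right _ _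
          _ = dist p s0 := by rw [h4]
          _ = r := hs0d.symm
      · have h3 := key s0 hs0S hs0a hs0b
        rw [← hs0d] at h3
        exact absurd h3 (lt_irrefl _)
    exact le_antisymm h1 h2
  · intro s hs hsa hsb
    exact key s hs hsa hsb
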